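/- Let φ be a universally quantified disjunction of literals of the form s^{k} x ∈ X_j or s^{k} x ∉ X_j, with maximal shift κ. Then an infinite word α (encoding the sets X_j) satisfies ∀x φ(x) if and only if for every residue s ∈ {0, ..., κ-1}, every natural number congruent to s modulo κ satisfies the disjunction. Consequently the set of models of ∀x φ(x) is an intersection of κ many co-Büchi recognisable languages, hence co-Büchi recognisable. -/

import Mathlib

structure Automaton (σ : Type) where
  Q : Type
  fin : Fintype Q
  Δ : Q → σ → Q → Prop
  q0 : Q
  F : Set Q

def Automaton.IsRun {σ : Type} (A : Automaton σ) (α : ℕ → σ) (ρ : ℕ → A.Q) : Prop :=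
  ρ 0 = A.q0 ∧ ∀ i, A.Δ (ρ i) (α i) (ρ (i + 1))

def Automaton.BuchiAccepts {σ : Type} (A : Automaton σ) (α : ℕ → σ) : Prop :=
  ∃ ρ, A.IsRun α ρ ∧ {i | ρ i ∈ A.F}.Infinite

def Automaton.CoBuchiAccepts {σ : Type} (A : Automaton σ) (α : ℕ → σ) : Prop :=
  ∃ ρ, A.IsRun α ρ ∧ {i | ρ i ∉ A.F}.Finite

def BuchiRecognisable {σ : Type} (L : Set (ℕ → σ)) : Prop :=
  ∃ A : Automaton σ, L = {α | A.BuchiAccepts α}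

def CoBuchiRecognisable {σ : Type} (L : Set (ℕ → σ)) : Prop :=
  ∃ A : Automaton σ, L = {α | A.CoBuchiAccepts α}

/-- `x` satisfies the disjunction `⋁ s^{k} x ∈ X_j ∨ ⋁ s^{k'} x ∉ X_{j'}`, where the
positive literals are listed in `pos` and the negative ones in `neg`. -/
def SatDisj (m : ℕ) (pos neg : List (ℕ × Fin m)) (α : ℕ → (Fin m → Bool)) (x : ℕ) : Prop :=
  (∃ p ∈ pos, α (x + p.1) p.2 = true) ∨ (∃ p ∈ neg, α (x + p.1) p.2 = false)

section Aux

variable (m κ : ℕ) (pos neg : List (ℕ × Fin m))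

/-- the window value at offset k, given buffer b (last κ letters) and current letter a -/
def winVal (b : Fin κ → (Fin m → Bool)) (a : Fin m → Bool) (k : ℕ) : Fin m → Bool :=
  if h : k < κ then b ⟨k, h⟩ else a

def OKwin (b : Fin κ → (Fin m → Bool)) (a : Fin m → Bool) : Prop :=
  (∃ p ∈ pos, winVal m κ b a p.1 p.2 = true) ∨ (∃ p ∈ neg, winVal m κ b a p.1 p.2 = false)

def shiftBuf (b : Fin κ → (Fin m → Bool)) (a : Fin m → Bool) : Fin κ → (Fin m → Bool) :=
  fun j => if h : (j : ℕ) + 1 < κ then b ⟨j + 1, h⟩ else a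

def winAut : Automaton (Fin m → Bool) where
  Q := Fin (κ + 1) × (Fin κ → (Fin m → Bool))
  fin := inferInstance
  Δ := fun q a q' =>
    q'.1 = ⟨min ((q.1 : ℕ) + 1) κ, by omega⟩ ∧
    q'.2 = shiftBuf m κ q.2 a ∧ ((q.1 : ℕ) = κ → OKwin m κ pos neg q.2 a)
  q0 := (⟨0, by omega⟩, fun _ _ => false)
  F := Set.univ

/-- canonical run -/
def canRun (α : ℕ → (Fin m → Bool)) (t : ℕ) : (winAut m κ pos neg).Q :=
  (⟨min t κ, by omega⟩, fun j => if κ ≤ t + j then α (t + j - κ) else fun _ => false)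

lemma canRun_zero (α : ℕ → (Fin m → Bool)) :
    canRun m κ pos neg α 0 = (winAut m κ pos neg).q0 := by
  apply Prod.ext
  · apply Fin.ext; simp [canRun, winAut]
  · funext j
    simp only [canRun, winAut]
    rw [if_neg (show ¬ κ ≤ 0 + (j : ℕ) from by have := j.2; omega)]

lemma canRun_step (α : ℕ → (Fin m → Bool)) (t : ℕ) :
    (canRun m κ pos neg α (t + 1)).1
      = ⟨min (((canRun m κ pos neg α t).1 : ℕ) + 1) κ, by omega⟩ ∧
    (canRun m κ pos neg α (t + 1)).2 = shiftBuf m κ (canRun m κ pos neg α t).2 (α t) := by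
  constructor
  · apply Fin.ext; simp [canRun]; omega
  · funext j
    simp only [canRun, shiftBuf]
    rcases j with ⟨j, hj⟩
    by_cases h : j + 1 < κ
    · rw [dif_pos h]
      simp only [Fin.val_mk]
      have e : t + 1 + j = t + (j + 1) := by omega
      rw [e]
    · rw [dif_neg h]
      simp only [Fin.val_mk]
      rw [if_pos (show κ ≤ t + 1 + j by omega)]
      have e2 : t + 1 + j - κ = t := by omega
      rw [e2]

lemma okwin_iff (α : ℕ → (Fin m → Bool)) (x : ℕ)
    (hmax : ∀ p ∈ pos ++ neg, p.1 ≤ κ) :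
    OKwin m κ pos neg (canRun m κ pos neg α (x + κ)).2 (α (x + κ)) ↔ SatDisj m pos neg α x := by
  have key : ∀ p : ℕ × Fin m, p.1 ≤ κ →
      winVal m κ (canRun m κ pos neg α (x + κ)).2 (α (x + κ)) p.1 = α (x + p.1) := by
    intro p hp
    by_cases h : p.1 < κ
    · simp only [winVal, canRun, dif_pos h, Fin.val_mk]
      rw [if_pos (show κ ≤ x + κ + p.1 by omega)]
      have e2 : x + κ + p.1 - κ = x + p.1 := by omega
      rw [e2]
    · simp only [winVal, dif_neg h]
      have hpk : p.1 = κ := le_antisymm hp (not_lt.1 h)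
      rw [hpk]
  constructor
  · rintro (⟨p, hp, h⟩ | ⟨p, hp, h⟩)
    · exact Or.inl ⟨p, hp, by rw [← key p (hmax p (by simp [hp]))]; exact h⟩
    · exact Or.inr ⟨p, hp, by rw [← key p (hmax p (by simp [hp]))]; exact h⟩
  · rintro (⟨p, hp, h⟩ | ⟨p, hp, h⟩)
    · exact Or.inl ⟨p, hp, by rw [key p (hmax p (by simp [hp]))]; exact h⟩
    · exact Or.inr ⟨p, hp, by rw [key p (hmax p (by simp [hp]))]; exact h⟩

lemma main_rec (hκ : 0 < κ) (hmax : ∀ p ∈ pos ++ neg, p.1 ≤ κ) :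
    CoBuchiRecognisable {α | ∀ x : ℕ, SatDisj m pos neg α x} := by
  refine ⟨winAut m κ pos neg, ?_⟩
  ext α
  simp only [Set.mem_setOf_eq]
  constructor
  · intro hα
    refine ⟨canRun m κ pos neg α, ⟨canRun_zero m κ pos neg α, ?_⟩, ?_⟩
    · intro t
      obtain ⟨h1, h2⟩ := canRun_step m κ pos neg α t
      refine ⟨h1, h2, ?_⟩
      intro hc
      simp only [canRun, Fin.val_mk] at hc
      have ht : κ ≤ t := by omega
      have hsat := (okwin_iff m κ pos neg α (t - κ) hmax).2 (hα (t - κ))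
      have he : t - κ + κ = t := by omega
      rwa [he] at hsat
    · convert Set.finite_empty
      ext i; simp [winAut]; exact Set.mem_univ _
  · rintro ⟨ρ, ⟨h0, hstep⟩, _⟩
    have hcan : ∀ t, ρ t = canRun m κ pos neg α t := by
      intro t
      induction t with
      | zero => rw [h0, canRun_zero]
      | succ t ih =>
        obtain ⟨h1, h2, -⟩ := hstep t
        obtain ⟨c1, c2⟩ := canRun_step m κ pos neg α t
        apply Prod.ext
        · rw [h1, c1, ih]
        · rw [h2, c2, ih]
    intro x
    obtain ⟨_, _, hchk⟩ := hstep (x + κ)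
    rw [hcan (x + κ)] at hchk
    have hc : ((canRun m κ pos neg α (x + κ)).1 : ℕ) = κ := by simp [canRun]
    exact (okwin_iff m κ pos neg α x hmax).1 (hchk hc)

end Aux

/-- The universal case: `α ⊨ ∀x φ(x)` iff every residue class mod the maximal shift `κ`
satisfies the disjunction everywhere; consequently the set of models is an intersection of
`κ` co-Büchi recognisable languages and is itself co-Büchi recognisable. -/
theorem universal_case (m κ : ℕ) (pos neg : List (ℕ × Fin m)) (hκ : 0 < κ)
    (hmax : ∀ p ∈ pos ++ neg, p.1 ≤ κ) :
    (∀ α : ℕ → (Fin m → Bool),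
      ((∀ x : ℕ, SatDisj m pos neg α x) ↔
        ∀ s : ℕ, s < κ → ∀ x : ℕ, x % κ = s → SatDisj m pos neg α x)) ∧
    (∃ Ls : Fin κ → Set (ℕ → (Fin m → Bool)),
      (∀ s : Fin κ, CoBuchiRecognisable (Ls s)) ∧
      {α | ∀ x : ℕ, SatDisj m pos neg α x} = ⋂ s : Fin κ, Ls s) ∧
    CoBuchiRecognisable {α | ∀ x : ℕ, SatDisj m pos neg α x} := by
  constructor
  · intro α
    constructor
    · intro h s _ x _
      exact h x
    · intro h x
      exact h (x % κ) (Nat.mod_lt x hκ) x rfl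
  have hrec := main_rec m κ pos neg hκ hmax
  refine ⟨⟨fun _ => {α | ∀ x : ℕ, SatDisj m pos neg α x}, fun _ => hrec, ?_⟩, hrec⟩
  haveI : Nonempty (Fin κ) := ⟨⟨0, hκ⟩⟩
  exact (Set.iInter_const _).symm
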